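/- arXiv:2603.28900 — 2 statements merged into one kernel-verified Lean document; each statement's English description precedes it below -/
import Mathlib

section
/- Let V : ℝⁿ → ℝ be differentiable with L-Lipschitz gradient, let S ∈ ℝⁿ, and let κ ∈ ℝⁿ with κᵢ ≥ 0. Let Ω(S) = {Ξ ∈ ℝⁿ : |Ξᵢ − Sᵢ| ≤ κᵢ for all i}. Then the exact worst-case value satisfies |inf_{Ξ ∈ Ω(S)} V(Ξ) − (V(S) − ∑ᵢ κᵢ·|∂V/∂xᵢ(S)|)| ≤ (L/2)·‖κ‖₂². -/
open scoped BigOperators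

lemma quad_bound {E : Type*} [NormedAddCommGroup E] [InnerProductSpace ℝ E]
    (V : E → ℝ) (L : ℝ) (hL : 0 ≤ L) (hdiff : Differentiable ℝ V)
    (hlip : ∀ x y, ‖fderiv ℝ V x - fderiv ℝ V y‖ ≤ L * ‖x - y‖)
    (x v : E) : |V (x + v) - V x - fderiv ℝ V x v| ≤ L / 2 * ‖v‖ ^ 2 := by
  set F : ℝ → E := fun t => x + t • v with hF
  have hFd : ∀ t : ℝ, HasDerivAt F v t := fun t => by
    rw [hF]; simpa using ((hasDerivAt_id t).smul_const v).const_add x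
  have hg : ∀ t : ℝ, HasDerivAt (fun t => V (F t)) (fderiv ℝ V (F t) v) t := fun t =>
    ((hdiff (F t)).hasFDerivAt).comp_hasDerivAt t (hFd t)
  have hlipW : LipschitzWith (Real.toNNReal L) (fun z => fderiv ℝ V z) := by
    apply LipschitzWith.of_dist_le_mul
    intro a b
    rw [dist_eq_norm, dist_eq_norm]
    simpa [Real.coe_toNNReal L hL] using hlip a b
  have hFc : Continuous F := by continuity
  have hcont : Continuous fun t => fderiv ℝ V (F t) v :=
    (hlipW.continuous.comp hFc).clm_apply continuous_const
  have hFTC : ∫ t in (0:ℝ)..1, fderiv ℝ V (F t) v = V (x + v) - V x := by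
    have := intervalIntegral.integral_eq_sub_of_hasDerivAt (f := fun t => V (F t))
      (fun t _ => hg t) (hcont.intervalIntegrable 0 1)
    simpa [hF] using this
  have hconst : ∫ t in (0:ℝ)..1, fderiv ℝ V x v = fderiv ℝ V x v := by
    simp
  have key : V (x + v) - V x - fderiv ℝ V x v
      = ∫ t in (0:ℝ)..1, (fderiv ℝ V (F t) v - fderiv ℝ V x v) := by
    rw [intervalIntegral.integral_sub (hcont.intervalIntegrable 0 1)
      (intervalIntegrable_const), hFTC, hconst]
  rw [key]
  have hbound : ∀ t ∈ Set.uIoc (0:ℝ) 1,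
      ‖fderiv ℝ V (F t) v - fderiv ℝ V x v‖ ≤ (L * ‖v‖ ^ 2) * t := by
    intro t ht
    rw [Set.uIoc_of_le (by norm_num)] at ht
    have h1 : ‖fderiv ℝ V (F t) v - fderiv ℝ V x v‖
        ≤ ‖fderiv ℝ V (F t) - fderiv ℝ V x‖ * ‖v‖ := by
      simpa using (fderiv ℝ V (F t) - fderiv ℝ V x).le_opNorm v
    have h2 : ‖fderiv ℝ V (F t) - fderiv ℝ V x‖ ≤ L * (t * ‖v‖) := by
      have := hlip (F t) x
      simpa [hF, norm_smul, abs_of_pos ht.1] using this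
    calc ‖fderiv ℝ V (F t) v - fderiv ℝ V x v‖ ≤ (L * (t * ‖v‖)) * ‖v‖ :=
          h1.trans (by exact mul_le_mul_of_nonneg_right h2 (norm_nonneg v))
      _ = (L * ‖v‖ ^ 2) * t := by ring
  have := intervalIntegral.norm_integral_le_abs_of_norm_le
    (f := fun t => fderiv ℝ V (F t) v - fderiv ℝ V x v) (g := fun t => (L * ‖v‖ ^ 2) * t)
    (μ := MeasureTheory.volume) (a := 0) (b := 1)
    (MeasureTheory.ae_restrict_of_forall_mem measurableSet_uIoc hbound)
    (by apply Continuous.intervalIntegrable; continuity)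
  have hint : ∫ t in (0:ℝ)..1, (L * ‖v‖ ^ 2) * t = L / 2 * ‖v‖ ^ 2 := by
    rw [intervalIntegral.integral_const_mul, integral_id]; ring
  rw [hint] at this
  refine le_trans (by simpa using this) (le_of_eq (abs_of_nonneg (by positivity)))

/-- Theorem 2: the first-order approximation of the worst-case value over the box
Ω(S) = {Ξ : |Ξᵢ − Sᵢ| ≤ κᵢ} has second-order error: the gap between
inf_{Ξ∈Ω(S)} V(Ξ) and V(S) − ∑ᵢ κᵢ|∂V/∂xᵢ(S)| is at most (L/2)‖κ‖₂². -/
theorem stmt_3 (n : ℕ) (V : EuclideanSpace ℝ (Fin n) → ℝ) (L : ℝ) (hL : 0 ≤ L)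
    (hdiff : Differentiable ℝ V)
    (hlip : ∀ x y, ‖fderiv ℝ V x - fderiv ℝ V y‖ ≤ L * ‖x - y‖)
    (S κ : EuclideanSpace ℝ (Fin n)) (hκ : ∀ i, 0 ≤ κ i) :
    |sInf (V '' {Ξ : EuclideanSpace ℝ (Fin n) | ∀ i, |Ξ i - S i| ≤ κ i}) -
        (V S - ∑ i, κ i * |fderiv ℝ V S (EuclideanSpace.single i 1)|)| ≤
      L / 2 * ‖κ‖ ^ 2 := by
  set g : Fin n → ℝ := fun i => fderiv ℝ V S (EuclideanSpace.single i 1) with hgdef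
  set c : ℝ := V S - ∑ i, κ i * |g i| with hc
  set B : ℝ := L / 2 * ‖κ‖ ^ 2 with hB
  have hrep : ∀ w : EuclideanSpace ℝ (Fin n), fderiv ℝ V S w = ∑ i, w i * g i := by
    intro w
    have hw : w = ∑ i, w i • EuclideanSpace.single i 1 := by
      ext j
      rw [WithLp.ofLp_sum, Finset.sum_apply]
      simp [EuclideanSpace.single_apply]
    conv_lhs => rw [hw]
    rw [map_sum]
    simp [hgdef, smul_eq_mul]
  have hnormsq : ‖κ‖ ^ 2 = ∑ i, κ i ^ 2 := by
    rw [EuclideanSpace.norm_eq, Real.sq_sqrt (by positivity)]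
    simp [sq_abs]
  -- lower bound for all elements of the image
  have hlow : ∀ y ∈ V '' {Ξ : EuclideanSpace ℝ (Fin n) | ∀ i, |Ξ i - S i| ≤ κ i},
      c - B ≤ y := by
    rintro y ⟨Ξ, hΞ, rfl⟩
    have hq := quad_bound V L hL hdiff hlip S (Ξ - S)
    rw [add_sub_cancel] at hq
    have hlin : -(∑ i, κ i * |g i|) ≤ fderiv ℝ V S (Ξ - S) := by
      rw [hrep, ← Finset.sum_neg_distrib]
      apply Finset.sum_le_sum
      intro i _
      have h1 : |(Ξ - S) i * g i| ≤ κ i * |g i| := by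
        rw [abs_mul]
        apply mul_le_mul_of_nonneg_right _ (abs_nonneg _)
        simpa using hΞ i
      linarith [neg_abs_le ((Ξ - S) i * g i)]
    have hn : ‖Ξ - S‖ ^ 2 ≤ ‖κ‖ ^ 2 := by
      rw [hnormsq, EuclideanSpace.norm_eq, Real.sq_sqrt (by positivity)]
      apply Finset.sum_le_sum
      intro i _
      have h2 : |(Ξ - S) i| ≤ |κ i| := by
        rw [abs_of_nonneg (hκ i)]; simpa using hΞ i
      calc ‖(Ξ - S) i‖ ^ 2 = |(Ξ - S) i| ^ 2 := by rw [Real.norm_eq_abs]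
        _ ≤ |κ i| ^ 2 := by gcongr
        _ = κ i ^ 2 := sq_abs _
    have habs := abs_le.mp hq
    have hLn : L / 2 * ‖Ξ - S‖ ^ 2 ≤ B := by
      rw [hB]; gcongr
    linarith [habs.1]
  have hne : (V '' {Ξ : EuclideanSpace ℝ (Fin n) | ∀ i, |Ξ i - S i| ≤ κ i}).Nonempty :=
    ⟨V S, S, fun i => by simpa using hκ i, rfl⟩
  have hbdd : BddBelow (V '' {Ξ : EuclideanSpace ℝ (Fin n) | ∀ i, |Ξ i - S i| ≤ κ i}) :=
    ⟨c - B, hlow⟩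
  -- upper bound: the minimizer of the linearization
  set sgn : Fin n → ℝ := fun i => if 0 ≤ g i then 1 else -1 with hsgn
  have hsgn_abs : ∀ i, |sgn i| = 1 := by
    intro i; simp only [hsgn]; split_ifs <;> simp
  have hsgn_mul : ∀ i, sgn i * g i = |g i| := by
    intro i; simp only [hsgn]; split_ifs with h
    · rw [abs_of_nonneg h]; ring
    · rw [abs_of_neg (lt_of_not_ge h)]; ring
  set w : EuclideanSpace ℝ (Fin n) := WithLp.toLp 2 (fun i => -(κ i * sgn i)) with hwdef
  have hwi : ∀ i, w i = -(κ i * sgn i) := fun i => rfl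
  have hmem : (S + w) ∈ {Ξ : EuclideanSpace ℝ (Fin n) | ∀ i, |Ξ i - S i| ≤ κ i} := by
    intro i
    have : (S + w) i - S i = w i := by simp
    rw [this, hwi, abs_neg, abs_mul, hsgn_abs, abs_of_nonneg (hκ i), mul_one]
  have hlinw : fderiv ℝ V S w = -(∑ i, κ i * |g i|) := by
    rw [hrep, ← Finset.sum_neg_distrib]
    congr 1; funext i
    rw [hwi, ← hsgn_mul i]; ring
  have hnw : ‖w‖ ^ 2 = ‖κ‖ ^ 2 := by
    rw [hnormsq, EuclideanSpace.norm_eq, Real.sq_sqrt (by positivity)]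
    congr 1; funext i
    rw [hwi, Real.norm_eq_abs, sq_abs, neg_pow, mul_pow]
    have : sgn i ^ 2 = 1 := by rw [← sq_abs, hsgn_abs]; norm_num
    rw [this]; ring
  have hq := quad_bound V L hL hdiff hlip S w
  have hupper : sInf (V '' {Ξ : EuclideanSpace ℝ (Fin n) | ∀ i, |Ξ i - S i| ≤ κ i})
      ≤ c + B := by
    refine le_trans (csInf_le hbdd ⟨S + w, hmem, rfl⟩) ?_
    have habs := (abs_le.mp hq).2
    rw [hlinw] at habs
    rw [hc, hB, ← hnw]
    linarith
  have hlower : c - B ≤ sInf (V '' {Ξ : EuclideanSpace ℝ (Fin n) | ∀ i, |Ξ i - S i| ≤ κ i}) :=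
    le_csInf hne hlow
  rw [abs_le]
  constructor <;> [linarith; linarith]
end

section
/- Let V : ℝⁿ → ℝ be differentiable with L-Lipschitz gradient, S ∈ ℝⁿ, κ ∈ ℝⁿ nonnegative, and Ω(S) the box {Ξ : |Ξᵢ − Sᵢ| ≤ κᵢ}. Then inf_{Ξ ∈ Ω(S)} V(Ξ) ≤ V(S) − ∑ᵢ κᵢ·|∂V/∂xᵢ(S)| + (L/2)·‖κ‖₂². -/
open scoped BigOperators

lemma descent {E : Type*} [NormedAddCommGroup E] [InnerProductSpace ℝ E]
    (V : E → ℝ) (L : ℝ) (hL : 0 ≤ L) (hdiff : Differentiable ℝ V)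
    (hlip : ∀ x y, ‖fderiv ℝ V x - fderiv ℝ V y‖ ≤ L * ‖x - y‖) (x y : E) :
    V y ≤ V x + fderiv ℝ V x (y - x) + L / 2 * ‖y - x‖ ^ 2 := by
  set d := y - x with hd
  have hlin : ∀ t : ℝ, HasDerivAt (fun t : ℝ => x + t • d) d t := by
    intro t
    simpa using ((hasDerivAt_id t).smul_const d).const_add x
  have hg : ∀ t : ℝ, HasDerivAt (fun t : ℝ => V (x + t • d)) (fderiv ℝ V (x + t • d) d) t := by
    intro t
    exact ((hdiff (x + t • d)).hasFDerivAt).comp_hasDerivAt t (hlin t)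
  have hcontf : Continuous fun t : ℝ => (fderiv ℝ V (x + t • d)) d := by
    have hc : Continuous fun z : E => fderiv ℝ V z := by
      rcases eq_or_lt_of_le hL with hL0 | hLpos
      · have : ∀ z w : E, fderiv ℝ V z = fderiv ℝ V w := by
          intro z w
          have := hlip z w
          rw [← hL0] at this
          have h0 : ‖fderiv ℝ V z - fderiv ℝ V w‖ ≤ 0 := by simpa using this
          have := le_antisymm h0 (norm_nonneg _)
          rwa [norm_eq_zero, sub_eq_zero] at this
        exact continuous_const.congr fun z => (this x z)
      · apply LipschitzWith.continuous (K := Real.toNNReal L)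
        intro z w
        simp only [edist_nndist]
        rw [← ENNReal.coe_mul, ENNReal.coe_le_coe, ← NNReal.coe_le_coe]
        push_cast
        simpa [dist_eq_norm, Real.coe_toNNReal', max_eq_left hL] using hlip z w
    exact (ContinuousLinearMap.apply ℝ ℝ d).continuous.comp
      (hc.comp (continuous_const.add (continuous_id.smul continuous_const)))
  have hint : ∀ a b : ℝ, IntervalIntegrable (fun t : ℝ => (fderiv ℝ V (x + t • d)) d)
      MeasureTheory.volume a b := fun a b => hcontf.intervalIntegrable a b
  have hftc : V y - V x = ∫ t in (0:ℝ)..1, (fderiv ℝ V (x + t • d)) d := by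
    have := intervalIntegral.integral_eq_sub_of_hasDerivAt
      (f := fun t : ℝ => V (x + t • d)) (a := 0) (b := 1)
      (fun t _ => hg t) (hint 0 1)
    rw [this]
    simp [hd]
  have hkey : V y - V x - fderiv ℝ V x d ≤ L / 2 * ‖d‖ ^ 2 := by
    have hconst : fderiv ℝ V x d = ∫ t in (0:ℝ)..1, (fderiv ℝ V x) d := by simp
    rw [hftc, hconst, ← intervalIntegral.integral_sub (hint 0 1)
      (intervalIntegrable_const)]
    have hbnd : ∀ t ∈ Set.Icc (0:ℝ) 1,
        (fderiv ℝ V (x + t • d)) d - (fderiv ℝ V x) d ≤ L * ‖d‖ ^ 2 * t := by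
      intro t ht
      have h1 : (fderiv ℝ V (x + t • d)) d - (fderiv ℝ V x) d
          = (fderiv ℝ V (x + t • d) - fderiv ℝ V x) d := by simp
      rw [h1]
      calc (fderiv ℝ V (x + t • d) - fderiv ℝ V x) d
          ≤ ‖(fderiv ℝ V (x + t • d) - fderiv ℝ V x) d‖ := le_abs_self _
        _ ≤ ‖fderiv ℝ V (x + t • d) - fderiv ℝ V x‖ * ‖d‖ :=
            ContinuousLinearMap.le_opNorm _ _
        _ ≤ (L * ‖(x + t • d) - x‖) * ‖d‖ := by
            have := hlip (x + t • d) x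
            exact mul_le_mul_of_nonneg_right this (norm_nonneg _)
        _ = L * ‖d‖ ^ 2 * t := by
            simp [norm_smul, abs_of_nonneg ht.1]
            ring
    calc (∫ t in (0:ℝ)..1, ((fderiv ℝ V (x + t • d)) d - (fderiv ℝ V x) d))
        ≤ ∫ t in (0:ℝ)..1, L * ‖d‖ ^ 2 * t := by
          apply intervalIntegral.integral_mono_on (by norm_num)
            ((hint 0 1).sub (intervalIntegrable_const))
            ((continuous_const.mul continuous_id).intervalIntegrable 0 1)
          exact hbnd
      _ = L / 2 * ‖d‖ ^ 2 := by
          rw [intervalIntegral.integral_const_mul]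
          simp [integral_id]
          ring
  linarith [hkey]

/-- Upper-bound half of Theorem 2:
inf_{Ξ∈Ω(S)} V(Ξ) ≤ V(S) − ∑ᵢ κᵢ|∂V/∂xᵢ(S)| + (L/2)‖κ‖₂². -/
theorem stmt_5 (n : ℕ) (V : EuclideanSpace ℝ (Fin n) → ℝ) (L : ℝ) (hL : 0 ≤ L)
    (hdiff : Differentiable ℝ V)
    (hlip : ∀ x y, ‖fderiv ℝ V x - fderiv ℝ V y‖ ≤ L * ‖x - y‖)
    (S κ : EuclideanSpace ℝ (Fin n)) (hκ : ∀ i, 0 ≤ κ i) :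
    sInf (V '' {Ξ : EuclideanSpace ℝ (Fin n) | ∀ i, |Ξ i - S i| ≤ κ i}) ≤
      V S - ∑ i, κ i * |fderiv ℝ V S (EuclideanSpace.single i 1)| + L / 2 * ‖κ‖ ^ 2 := by
  classical
  set g : Fin n → ℝ := fun i => fderiv ℝ V S (EuclideanSpace.single i 1) with hg
  set Ξ : EuclideanSpace ℝ (Fin n) := WithLp.toLp 2 fun i => S i - κ i * Real.sign (g i) with hΞ
  have hsign : ∀ i, |Real.sign (g i)| ≤ 1 := by
    intro i; rcases Real.sign_apply_eq (g i) with h | h | h <;> simp [h]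
  have hΞmem : Ξ ∈ {Ξ : EuclideanSpace ℝ (Fin n) | ∀ i, |Ξ i - S i| ≤ κ i} := by
    intro i
    have : Ξ i - S i = -(κ i * Real.sign (g i)) := by simp [hΞ]
    rw [this, abs_neg, abs_mul, abs_of_nonneg (hκ i)]
    calc κ i * |Real.sign (g i)| ≤ κ i * 1 :=
          mul_le_mul_of_nonneg_left (hsign i) (hκ i)
      _ = κ i := mul_one _
  -- membership bound on set: bounded
  have hbox : ∀ x ∈ {Ξ : EuclideanSpace ℝ (Fin n) | ∀ i, |Ξ i - S i| ≤ κ i},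
      ‖x - S‖ ≤ ‖κ‖ := by
    intro x hx
    rw [EuclideanSpace.norm_eq, EuclideanSpace.norm_eq]
    apply Real.sqrt_le_sqrt
    apply Finset.sum_le_sum
    intro i _
    have h1 : ‖(x - S : EuclideanSpace ℝ (Fin n)) i‖ ≤ ‖κ i‖ := by
      have : (x - S : EuclideanSpace ℝ (Fin n)) i = x i - S i := rfl
      rw [this, Real.norm_eq_abs, Real.norm_eq_abs, abs_of_nonneg (hκ i)]
      exact hx i
    exact pow_le_pow_left₀ (norm_nonneg _) h1 2
  have hclosed : IsClosed {Ξ : EuclideanSpace ℝ (Fin n) | ∀ i, |Ξ i - S i| ≤ κ i} := by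
    have : {Ξ : EuclideanSpace ℝ (Fin n) | ∀ i, |Ξ i - S i| ≤ κ i}
        = ⋂ i, {Ξ : EuclideanSpace ℝ (Fin n) | |Ξ i - S i| ≤ κ i} := by
      ext x; simp
    rw [this]
    apply isClosed_iInter
    intro i
    exact isClosed_le (Continuous.abs ((continuous_apply i).comp (PiLp.continuous_ofLp 2 _)
      |>.sub continuous_const)) continuous_const
  have hcpt : IsCompact {Ξ : EuclideanSpace ℝ (Fin n) | ∀ i, |Ξ i - S i| ≤ κ i} := by
    apply Metric.isCompact_of_isClosed_isBounded hclosed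
    apply Bornology.IsBounded.subset (Metric.isBounded_closedBall (x := S) (r := ‖κ‖))
    intro x hx
    simp [Metric.mem_closedBall, dist_eq_norm]
    exact hbox x hx
  have hbdd : BddBelow (V '' {Ξ : EuclideanSpace ℝ (Fin n) | ∀ i, |Ξ i - S i| ≤ κ i}) :=
    (hcpt.image hdiff.continuous).bddBelow
  have hsinf : sInf (V '' {Ξ : EuclideanSpace ℝ (Fin n) | ∀ i, |Ξ i - S i| ≤ κ i}) ≤ V Ξ :=
    csInf_le hbdd ⟨Ξ, hΞmem, rfl⟩
  -- compute fderiv on Ξ - S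
  have hrepr : (Ξ - S : EuclideanSpace ℝ (Fin n))
      = ∑ i, (-(κ i * Real.sign (g i))) • EuclideanSpace.single i (1:ℝ) := by
    ext j
    rw [WithLp.ofLp_sum, Finset.sum_apply]
    simp [hΞ, EuclideanSpace.single_apply, PiLp.sub_apply, PiLp.smul_apply]
  have hfd : fderiv ℝ V S (Ξ - S) = -∑ i, κ i * |g i| := by
    rw [hrepr, map_sum]
    rw [← Finset.sum_neg_distrib]
    apply Finset.sum_congr rfl
    intro i _
    rw [map_smul]
    have hsm : Real.sign (g i) * g i = |g i| := by
      rcases lt_trichotomy (g i) 0 with h | h | h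
      · rw [Real.sign_of_neg h, abs_of_neg h]; ring
      · simp [h]
      · rw [Real.sign_of_pos h, abs_of_pos h]; ring
    simp only [smul_eq_mul, ← hg]
    rw [← hsm]; ring
  have hnorm : ‖(Ξ - S : EuclideanSpace ℝ (Fin n))‖ ≤ ‖κ‖ := hbox Ξ hΞmem
  have hdesc := descent V L hL hdiff hlip S Ξ
  have hnorm2 : L / 2 * ‖(Ξ - S : EuclideanSpace ℝ (Fin n))‖ ^ 2 ≤ L / 2 * ‖κ‖ ^ 2 := by
    apply mul_le_mul_of_nonneg_left _ (by linarith)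
    exact pow_le_pow_left₀ (norm_nonneg _) hnorm 2
  calc sInf _ ≤ V Ξ := hsinf
    _ ≤ V S + fderiv ℝ V S (Ξ - S) + L / 2 * ‖(Ξ - S : EuclideanSpace ℝ (Fin n))‖ ^ 2 := hdesc
    _ ≤ V S - ∑ i, κ i * |g i| + L / 2 * ‖κ‖ ^ 2 := by rw [hfd]; linarith
end
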